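/- Let G be a finitely generated group that is a limit of hyperbolic groups. If the isoperimetric spectrum f_{G,X}(k,m,n) is essentially independent of k, i.e., equivalent under ∼ to a function in 𝓕 that depends on m and n only, then f_{G,X}(k,m,n) ∼ n/m. -/

import Mathlib

open Function

namespace IsoSpecPaper

variable {ι : Type*} {G : Type*} [Group G]

/-- The (reduced) length of an element of a free group. -/
noncomputable def wnorm (w : FreeGroup ι) : ℕ :=
  @FreeGroup.norm ι (Classical.decEq ι) w

/-- `triv φ k` : the set of words of length at most `k` in the generators
(and their inverses) representing the identity of `G` under the marking `φ`. -/
noncomputable def triv (φ : FreeGroup ι →* G) (k : ℕ) : Set (FreeGroup ι) :=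
  {w | wnorm w ≤ k ∧ φ w = 1}

/-- `AreaLe R w l` : `w` is a product of `l` conjugates of elements of `R` or
their inverses in the free group. -/
def AreaLe (R : Set (FreeGroup ι)) (w : FreeGroup ι) (l : ℕ) : Prop :=
  ∃ L : List (FreeGroup ι × FreeGroup ι), L.length = l ∧
    (∀ p ∈ L, p.2 ∈ R ∨ p.2⁻¹ ∈ R) ∧
    w = (L.map fun p => p.1⁻¹ * p.2 * p.1).prod

/-- The area of `w` with respect to the set of relators `R`. -/
noncomputable def area (R : Set (FreeGroup ι)) (w : FreeGroup ι) : ℕ :=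
  sInf {l | AreaLe R w l}

/-- The isoperimetric spectrum of the marked group `(G, φ)`:
`isoSpec φ k m n = max { area_{S_m}(w) : w ∈ ⟪S_k⟫, ‖w‖ ≤ n }`. -/
noncomputable def isoSpec (φ : FreeGroup ι →* G) (k m n : ℕ) : ℕ :=
  sSup (area (triv φ m) '' {w | w ∈ Subgroup.normalClosure (triv φ k) ∧ wnorm w ≤ n})

/-- The real-valued isoperimetric spectrum. -/
noncomputable def isoSpecR (φ : FreeGroup ι →* G) : ℕ → ℕ → ℕ → ℝ :=
  fun k m n => (isoSpec φ k m n : ℝ)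

/-- The Dehn function of the presentation with relators `R`. -/
noncomputable def dehn (R : Set (FreeGroup ι)) (n : ℕ) : ℕ :=
  sSup (area R '' {w | w ∈ Subgroup.normalClosure R ∧ wnorm w ≤ n})

/-- The quasi-order `f ≼ g` on functions of triples `(k,m,n)` of positive integers
with `m ≥ k`. -/
def SpecLE (f g : ℕ → ℕ → ℕ → ℝ) : Prop :=
  ∃ C : ℕ, 0 < C ∧ ∀ k m n : ℕ, 0 < k → 0 < m → 0 < n → C * k ≤ m →
    f k (C * m) n ≤ C * g (C * k) m (C * n) + C * (n : ℝ) / m + C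

/-- Equivalence of isoperimetric functions: `f ∼ g`. -/
def SpecEquiv (f g : ℕ → ℕ → ℕ → ℝ) : Prop := SpecLE f g ∧ SpecLE g f

/-- The linear spectrum `(k,m,n) ↦ n/m`. -/
noncomputable def linSpec : ℕ → ℕ → ℕ → ℝ := fun _ m n => (n : ℝ) / m

/-- The word length of `g ∈ G` with respect to the marking `φ`. -/
noncomputable def wlen (φ : FreeGroup ι →* G) (g : G) : ℕ :=
  sInf {n | ∃ w : FreeGroup ι, wnorm w = n ∧ φ w = g}

/-- The word metric on `G` with respect to the marking `φ`. -/
noncomputable def wdist (φ : FreeGroup ι →* G) (g h : G) : ℕ := wlen φ (g⁻¹ * h)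

/-- Quasi-isometry of marked groups with respect to their word metrics. -/
noncomputable def QuasiIsometric {H : Type*} [Group H] {κ : Type*}
    (φ : FreeGroup ι →* G) (ψ : FreeGroup κ →* H) : Prop :=
  ∃ L : ℝ, 0 ≤ L ∧ ∃ (α : G → H) (β : H → G),
    (∀ x y : G, (wdist ψ (α x) (α y) : ℝ) ≤ L * wdist φ x y + L) ∧
    (∀ u v : H, (wdist φ (β u) (β v) : ℝ) ≤ L * wdist ψ u v + L) ∧
    (∀ t : H, (wdist ψ (α (β t)) t : ℝ) ≤ L) ∧
    (∀ s : G, (wdist φ (β (α s)) s : ℝ) ≤ L)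

/-- A (combinatorial) geodesic path of length `n` in the Cayley graph of `(G, φ)`:
consecutive vertices are at distance at most `1` and the endpoints are at
distance exactly `n`. -/
noncomputable def IsGeodesic (φ : FreeGroup ι →* G) {n : ℕ} (p : Fin (n + 1) → G) : Prop :=
  (∀ i : Fin n, wdist φ (p i.castSucc) (p i.succ) ≤ 1) ∧
  wdist φ (p 0) (p (Fin.last n)) = n

/-- Every vertex of the path `p` lies within distance `δ` of the set `A`. -/
noncomputable def ThinAt (φ : FreeGroup ι →* G) (δ : ℝ) {n : ℕ}
    (p : Fin (n + 1) → G) (A : Set G) : Prop :=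
  ∀ i, ∃ a ∈ A, (wdist φ (p i) a : ℝ) ≤ δ

/-- The Cayley graph of `(G, φ)` is `δ`-hyperbolic: every geodesic triangle is `δ`-thin. -/
noncomputable def HypConst (φ : FreeGroup ι →* G) (δ : ℝ) : Prop :=
  ∀ (n₁ n₂ n₃ : ℕ) (p : Fin (n₁ + 1) → G) (q : Fin (n₂ + 1) → G) (r : Fin (n₃ + 1) → G),
    IsGeodesic φ p → IsGeodesic φ q → IsGeodesic φ r →
    p (Fin.last n₁) = q 0 → q (Fin.last n₂) = r 0 → r (Fin.last n₃) = p 0 →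
    ThinAt φ δ p (Set.range q ∪ Set.range r) ∧
    ThinAt φ δ q (Set.range r ∪ Set.range p) ∧
    ThinAt φ δ r (Set.range p ∪ Set.range q)

/-- The marked group `(G, φ)` is hyperbolic. -/
noncomputable def IsHyperbolic (φ : FreeGroup ι →* G) : Prop :=
  ∃ δ : ℝ, 0 ≤ δ ∧ HypConst φ δ

/-- `G` (marked by `φ`) is a limit (direct limit) of hyperbolic groups. -/
noncomputable def LimitOfHyperbolic (φ : FreeGroup ι →* G) : Prop :=
  Surjective φ ∧ ∃ R : ℕ → Set (FreeGroup ι),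
    (∀ i j, i ≤ j → R i ⊆ R j) ∧
    φ.ker = Subgroup.normalClosure (⋃ i, R i) ∧
    ∀ i, IsHyperbolic (QuotientGroup.mk' (Subgroup.normalClosure (R i)))

/-- `G` (marked by `φ`) is well-approximated by hyperbolic groups. -/
noncomputable def WellApproximated (φ : FreeGroup ι →* G) : Prop :=
  Surjective φ ∧ ∃ R : ℕ → Set (FreeGroup ι),
    (∀ i j, i ≤ j → R i ⊆ R j) ∧
    φ.ker = Subgroup.normalClosure (⋃ i, R i) ∧
    (∀ i, IsHyperbolic (QuotientGroup.mk' (Subgroup.normalClosure (R i)))) ∧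
    ∃ C : ℕ, 0 < C ∧ ∀ i : ℕ, 0 < i →
      (∀ w : FreeGroup ι, wnorm w ≤ i → φ w = 1 →
        w ∈ Subgroup.normalClosure (R i)) ∧
      HypConst (QuotientGroup.mk' (Subgroup.normalClosure (R i))) ((C * i : ℕ) : ℝ)


/-! ## Auxiliary development -/

/-! ### wnorm basics -/

theorem wnorm_one : wnorm (1 : FreeGroup ι) = 0 := @FreeGroup.norm_one ι (Classical.decEq ι)

theorem wnorm_inv (w : FreeGroup ι) : wnorm w⁻¹ = wnorm w :=
  @FreeGroup.norm_inv_eq ι (Classical.decEq ι) w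

theorem wnorm_mul_le (x y : FreeGroup ι) : wnorm (x * y) ≤ wnorm x + wnorm y :=
  @FreeGroup.norm_mul_le ι (Classical.decEq ι) x y

theorem wnorm_mk_le (L : List (ι × Bool)) : wnorm (FreeGroup.mk L) ≤ L.length :=
  @FreeGroup.norm_mk_le ι L (Classical.decEq ι)

theorem wnorm_eq_zero {w : FreeGroup ι} : wnorm w = 0 ↔ w = 1 :=
  @FreeGroup.norm_eq_zero ι (Classical.decEq ι) w

theorem wnorm_toWord (w : FreeGroup ι) :
    wnorm w = (@FreeGroup.toWord ι (Classical.decEq ι) w).length := rfl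

theorem finite_wnorm_le [Finite ι] (k : ℕ) : {w : FreeGroup ι | wnorm w ≤ k}.Finite := by
  classical
  have h : {w : FreeGroup ι | wnorm w ≤ k} ⊆
      (fun l : List (ι × Bool) => FreeGroup.mk l) '' {l | l.length ≤ k} := by
    intro w hw
    refine ⟨@FreeGroup.toWord ι (Classical.decEq ι) w, ?_, @FreeGroup.mk_toWord ι (Classical.decEq ι) w⟩
    simpa [← wnorm_toWord] using hw
  exact ((List.finite_length_le (ι × Bool) k).image _).subset h

/-! ### AreaLe basics -/

theorem areaLe_one (R : Set (FreeGroup ι)) : AreaLe R 1 0 :=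
  ⟨[], rfl, by simp, by simp⟩

theorem areaLe_of_mem {R : Set (FreeGroup ι)} {w : FreeGroup ι} (h : w ∈ R) : AreaLe R w 1 :=
  ⟨[(1, w)], rfl, by simpa using Or.inl h, by simp⟩

theorem areaLe_mul {R : Set (FreeGroup ι)} {x y : FreeGroup ι} {lx ly : ℕ}
    (hx : AreaLe R x lx) (hy : AreaLe R y ly) : AreaLe R (x * y) (lx + ly) := by
  obtain ⟨Lx, hLx, hmx, hpx⟩ := hx
  obtain ⟨Ly, hLy, hmy, hpy⟩ := hy
  refine ⟨Lx ++ Ly, by simp [hLx, hLy], ?_, ?_⟩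
  · intro p hp
    rcases List.mem_append.1 hp with h | h
    · exact hmx p h
    · exact hmy p h
  · simp [List.map_append, List.prod_append, ← hpx, ← hpy]

private theorem conj_map_prod (c : FreeGroup ι) (L : List (FreeGroup ι × FreeGroup ι)) :
    (L.map fun p => ((p.1 * c)⁻¹ * p.2 * (p.1 * c))).prod
      = c⁻¹ * (L.map fun p => p.1⁻¹ * p.2 * p.1).prod * c := by
  induction L with
  | nil => simp
  | cons hd tl ih =>
      simp only [List.map_cons, List.prod_cons, ih]
      group

theorem areaLe_conj {R : Set (FreeGroup ι)} {w : FreeGroup ι} {l : ℕ} (c : FreeGroup ι)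
    (h : AreaLe R w l) : AreaLe R (c⁻¹ * w * c) l := by
  obtain ⟨L, hL, hm, hp⟩ := h
  refine ⟨L.map fun p => (p.1 * c, p.2), by simp [hL], ?_, ?_⟩
  · intro p hp
    obtain ⟨q, hq, rfl⟩ := List.mem_map.1 hp
    exact hm q hq
  · rw [hp]
    rw [List.map_map]
    have := conj_map_prod c L
    simpa [Function.comp] using this.symm ▸ rfl

theorem areaLe_mono {R R' : Set (FreeGroup ι)} (hR : R ⊆ R') {w : FreeGroup ι} {l : ℕ}
    (h : AreaLe R w l) : AreaLe R' w l := by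
  obtain ⟨L, hL, hm, hp⟩ := h
  exact ⟨L, hL, fun p hp => (hm p hp).imp (@hR _) (@hR _), hp⟩


/-! ### wlen and wdist -/

section Metric
variable {ψ : FreeGroup ι →* G}

theorem wlen_le {g : G} {u : FreeGroup ι} (hu : ψ u = g) : wlen ψ g ≤ wnorm u :=
  Nat.sInf_le ⟨u, rfl, hu⟩

theorem exists_wlen (hs : Surjective ψ) (g : G) :
    ∃ u : FreeGroup ι, wnorm u = wlen ψ g ∧ ψ u = g := by
  obtain ⟨u, hu⟩ := hs g
  have hne : {n : ℕ | ∃ w : FreeGroup ι, wnorm w = n ∧ ψ w = g}.Nonempty := ⟨wnorm u, u, rfl, hu⟩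
  exact Nat.sInf_mem hne

theorem wlen_one : wlen ψ (1 : G) = 0 :=
  Nat.le_zero.1 (by simpa [wnorm_one] using wlen_le (map_one ψ))

theorem wlen_inv (hs : Surjective ψ) (g : G) : wlen ψ g⁻¹ = wlen ψ g := by
  have key : ∀ x : G, wlen ψ x⁻¹ ≤ wlen ψ x := by
    intro x
    obtain ⟨u, hu, hux⟩ := exists_wlen hs x
    calc wlen ψ x⁻¹ ≤ wnorm u⁻¹ := wlen_le (by simp [hux])
    _ = wlen ψ x := by rw [wnorm_inv, hu]
  exact le_antisymm (key g) (by simpa using key g⁻¹)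

theorem wlen_mul_le (hs : Surjective ψ) (g h : G) :
    wlen ψ (g * h) ≤ wlen ψ g + wlen ψ h := by
  obtain ⟨u, hu, hug⟩ := exists_wlen hs g
  obtain ⟨v, hv, hvh⟩ := exists_wlen hs h
  calc wlen ψ (g * h) ≤ wnorm (u * v) := wlen_le (by simp [hug, hvh])
  _ ≤ wnorm u + wnorm v := wnorm_mul_le u v
  _ = _ := by rw [hu, hv]

theorem wlen_eq_zero (hs : Surjective ψ) {g : G} (h : wlen ψ g = 0) : g = 1 := by
  obtain ⟨u, hu, hug⟩ := exists_wlen hs g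
  rw [h, wnorm_eq_zero] at hu
  rw [← hug, hu, map_one]

theorem wdist_self (x : G) : wdist ψ x x = 0 := by
  simp [wdist, wlen_one]

theorem wdist_comm (hs : Surjective ψ) (x y : G) : wdist ψ x y = wdist ψ y x := by
  have h : (x⁻¹ * y)⁻¹ = y⁻¹ * x := by group
  calc wdist ψ x y = wlen ψ ((x⁻¹ * y)⁻¹) := (wlen_inv hs _).symm
  _ = wlen ψ (y⁻¹ * x) := by rw [h]

theorem wdist_triangle (hs : Surjective ψ) (x y z : G) :
    wdist ψ x z ≤ wdist ψ x y + wdist ψ y z := by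
  have : x⁻¹ * z = (x⁻¹ * y) * (y⁻¹ * z) := by group
  rw [wdist, this]
  exact wlen_mul_le hs _ _

theorem wdist_mul_left (c x y : G) : wdist ψ (c * x) (c * y) = wdist ψ x y := by
  have : (c * x)⁻¹ * (c * y) = x⁻¹ * y := by group
  rw [wdist, this]; rfl

theorem wdist_eq_zero (hs : Surjective ψ) {x y : G} (h : wdist ψ x y = 0) : x = y := by
  have := wlen_eq_zero hs h
  have : y = x * (x⁻¹ * y) := by group
  rw [this, wlen_eq_zero hs h, mul_one]

/-! ### geodesics -/

theorem exists_geodesic (hs : Surjective ψ) (x y : G) :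
    ∃ p : Fin (wdist ψ x y + 1) → G, IsGeodesic ψ p ∧ p 0 = x ∧ p (Fin.last _) = y := by
  classical
  obtain ⟨u, hu, huxy⟩ := exists_wlen hs (x⁻¹ * y)
  set n := wdist ψ x y with hn
  letI instDec : DecidableEq ι := Classical.decEq ι
  set l := FreeGroup.toWord u with hl
  have hlen : l.length = n := hu
  refine ⟨fun i => x * ψ (FreeGroup.mk (l.take i.val)), ⟨?_, ?_⟩, ?_, ?_⟩
  · intro i
    have hstep : wdist ψ (x * ψ (FreeGroup.mk (l.take i.val)))
        (x * ψ (FreeGroup.mk (l.take (i.val + 1)))) ≤ 1 := by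
      rw [wdist_mul_left]
      have hiv : i.val < l.length := by rw [hlen]; exact i.isLt
      have htake : l.take (i.val + 1) = l.take i.val ++ [l[i.val]] := by
        rw [List.take_succ]; simp [List.getElem?_eq_getElem hiv]
      have hmk : FreeGroup.mk (l.take (i.val + 1))
          = FreeGroup.mk (l.take i.val) * FreeGroup.mk [l[i.val]] := by
        rw [FreeGroup.mul_mk, htake]
      have : (ψ (FreeGroup.mk (l.take i.val)))⁻¹ * ψ (FreeGroup.mk (l.take (i.val + 1)))
          = ψ (FreeGroup.mk [l[i.val]]) := by
        rw [hmk, map_mul]; group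
      rw [wdist, this]
      calc wlen ψ _ ≤ wnorm (FreeGroup.mk [l[i.val]]) := wlen_le rfl
      _ ≤ 1 := wnorm_mk_le _
    exact hstep
  · have h0 : (fun i : Fin (n+1) => x * ψ (FreeGroup.mk (l.take i.val))) 0 = x := by
      show x * ψ (FreeGroup.mk (l.take 0)) = x
      rw [List.take_zero, show (FreeGroup.mk ([] : List (ι × Bool))) = 1 from rfl, map_one,
        mul_one]
    have hlast : (fun i : Fin (n+1) => x * ψ (FreeGroup.mk (l.take i.val))) (Fin.last n) = y := by
      show x * ψ (FreeGroup.mk (l.take (Fin.last n).val)) = y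
      rw [Fin.val_last, ← hlen, List.take_length, hl, FreeGroup.mk_toWord, huxy]
      group
    rw [h0, hlast]
  · show x * ψ (FreeGroup.mk (l.take 0)) = x
    rw [List.take_zero, show (FreeGroup.mk ([] : List (ι × Bool))) = 1 from rfl, map_one, mul_one]
  · show x * ψ (FreeGroup.mk (l.take (Fin.last n).val)) = y
    rw [Fin.val_last, ← hlen, List.take_length, hl, FreeGroup.mk_toWord, huxy]
    group

theorem seq_dist_le {n : ℕ} {q : ℕ → G}
    (hq : ∀ i, i < n → wdist ψ (q i) (q (i + 1)) ≤ 1) (hs : Surjective ψ) :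
    ∀ d v : ℕ, v + d ≤ n → wdist ψ (q v) (q (v + d)) ≤ d := by
  intro d
  induction d with
  | zero => intro v _; simpa using (wdist_self (ψ := ψ) (q v)).le
  | succ d ih =>
      intro v h
      have h1 : v + d ≤ n := by omega
      have h2 : v + d < n := by omega
      have t1 := ih v h1
      have t2 := hq (v + d) h2
      have t3 := wdist_triangle hs (q v) (q (v + d)) (q (v + d + 1))
      have : v + (d + 1) = v + d + 1 := by omega
      rw [this]
      omega

theorem geodesic_param {n : ℕ} {p : Fin (n + 1) → G} (hp : IsGeodesic ψ p)
    (hs : Surjective ψ) (i : Fin (n + 1)) :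
    wdist ψ (p 0) (p i) = i.val ∧ wdist ψ (p i) (p (Fin.last n)) = n - i.val := by
  obtain ⟨hstep, hends⟩ := hp
  set q : ℕ → G := fun j => p ⟨min j n, by omega⟩ with hqdef
  have hq : ∀ j, j < n → wdist ψ (q j) (q (j + 1)) ≤ 1 := by
    intro j hj
    have e1 : q j = p ((⟨j, hj⟩ : Fin n).castSucc) := by
      apply congrArg p; apply Fin.ext; simp; omega
    have e2 : q (j + 1) = p ((⟨j, hj⟩ : Fin n).succ) := by
      apply congrArg p; apply Fin.ext; simp [Fin.succ]; omega
    rw [e1, e2]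
    exact hstep _
  have hqv : ∀ j : Fin (n+1), q j.val = p j := by
    intro j
    apply congrArg p; apply Fin.ext; simp; omega
  have hq0 : q 0 = p 0 := by
    have := hqv 0; simpa using this
  have hqn : q n = p (Fin.last n) := by
    have := hqv (Fin.last n); simpa using this
  have hi : i.val ≤ n := by omega
  have h1 : wdist ψ (p 0) (p i) ≤ i.val := by
    have := seq_dist_le hq hs i.val 0 (by omega)
    simpa [hq0, hqv i] using this
  have h2 : wdist ψ (p i) (p (Fin.last n)) ≤ n - i.val := by
    have := seq_dist_le hq hs (n - i.val) i.val (by omega)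
    have e : i.val + (n - i.val) = n := by omega
    rw [e, hqv i, hqn] at this
    exact this
  have h3 := wdist_triangle hs (p 0) (p i) (p (Fin.last n))
  rw [hends] at h3
  omega

end Metric


/-! ### Gromov products and hyperbolicity -/

section Hyp
variable {ψ : FreeGroup ι →* G}

/-- The Gromov product `(x|y)_w`. -/
noncomputable def gp (ψ : FreeGroup ι →* G) (w x y : G) : ℝ :=
  ((wdist ψ w x : ℝ) + (wdist ψ w y : ℝ) - (wdist ψ x y : ℝ)) / 2

theorem dR_tri (hs : Surjective ψ) (x y z : G) :
    (wdist ψ x z : ℝ) ≤ (wdist ψ x y : ℝ) + (wdist ψ y z : ℝ) := by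
  exact_mod_cast wdist_triangle hs x y z

theorem dR_symm (hs : Surjective ψ) (x y : G) : (wdist ψ x y : ℝ) = (wdist ψ y x : ℝ) := by
  exact_mod_cast wdist_comm hs x y

theorem gp_comm (hs : Surjective ψ) (w x y : G) : gp ψ w x y = gp ψ w y x := by
  unfold gp; rw [dR_symm hs x y]; ring

theorem gp_nonneg (hs : Surjective ψ) (w x y : G) : 0 ≤ gp ψ w x y := by
  have h := dR_tri hs x w y
  rw [dR_symm hs x w] at h
  unfold gp; linarith

theorem gp_le_left (hs : Surjective ψ) (w x y : G) : gp ψ w x y ≤ (wdist ψ w x : ℝ) := by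
  have h := dR_tri hs w x y
  unfold gp; linarith

/-- Any point on a geodesic from `x` to `y` is at distance at least `(x|y)_w` from `w`. -/
theorem gp_le_dist_geodesic (hs : Surjective ψ) {n : ℕ} {p : Fin (n + 1) → G}
    (hp : IsGeodesic ψ p) (w : G) (i : Fin (n + 1)) :
    gp ψ w (p 0) (p (Fin.last n)) ≤ (wdist ψ w (p i) : ℝ) := by
  obtain ⟨h1, h2⟩ := geodesic_param hp hs i
  have hxy : wdist ψ (p 0) (p (Fin.last n)) = n := hp.2
  have hi : i.val ≤ n := by omega
  have t1 := dR_tri hs w (p i) (p 0)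
  have t2 := dR_tri hs w (p i) (p (Fin.last n))
  have e1 : (wdist ψ (p i) (p 0) : ℝ) = (i.val : ℝ) := by
    rw [dR_symm hs (p i) (p 0), h1]
  have e2 : (wdist ψ (p i) (p (Fin.last n)) : ℝ) = (n : ℝ) - (i.val : ℝ) := by
    rw [h2]; push_cast [Nat.cast_sub hi]; ring
  unfold gp
  rw [hxy]
  push_cast
  linarith

/-- Realization: some point of any geodesic from `x` to `y` is at distance at most
`(x|y)_w + 2δ + 1` from `w`. -/
theorem gp_realize (hs : Surjective ψ) {δ : ℝ} (hδ : 0 ≤ δ) (hyp : HypConst ψ δ)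
    (w : G) {n : ℕ} {q : Fin (n + 1) → G} (hq : IsGeodesic ψ q) :
    ∃ i : Fin (n + 1), (wdist ψ w (q i) : ℝ) ≤ gp ψ w (q 0) (q (Fin.last n)) + 2 * δ + 1 := by
  set x := q 0 with hx
  set y := q (Fin.last n) with hy
  obtain ⟨p, hp, hp0, hpl⟩ := exists_geodesic hs w x
  obtain ⟨r, hr, hr0, hrl⟩ := exists_geodesic hs y w
  have hn : wdist ψ x y = n := hq.2
  have hgpxy : gp ψ x y w ≤ (n : ℝ) := by
    have h1 := gp_le_left hs x y w
    rw [hn] at h1; exact h1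
  have hgpnn : 0 ≤ gp ψ x y w := gp_nonneg hs x y w
  set j : ℕ := min n ⌈gp ψ x y w⌉₊ with hj
  have hjn : j ≤ n := min_le_left _ _
  have hjub : (j : ℝ) ≤ gp ψ x y w + 1 := by
    have hceil := Nat.ceil_lt_add_one hgpnn
    have : (j : ℝ) ≤ (⌈gp ψ x y w⌉₊ : ℝ) := by
      exact_mod_cast min_le_right n _
    linarith
  have hjlb : gp ψ x y w ≤ (j : ℝ) := by
    rcases le_or_gt (⌈gp ψ x y w⌉₊ : ℕ) n with h | h
    · have hje : j = ⌈gp ψ x y w⌉₊ := by omega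
      rw [hje]; exact Nat.le_ceil _
    · have hje : j = n := by omega
      rw [hje]; exact hgpxy
  have hthin := hyp _ _ _ p q r hp hq hr (by rw [hpl]) (by rw [hr0]) (by rw [hrl, hp0])
  obtain ⟨-, hthinq, -⟩ := hthin
  obtain ⟨a, ha, hda⟩ := hthinq ⟨j, by omega⟩
  set qj := q ⟨j, by omega⟩ with hqj
  obtain ⟨hq1, hq2⟩ := geodesic_param hq hs ⟨j, by omega⟩
  have hq1n : wdist ψ x qj = j := by simpa using hq1
  have hq1' : (wdist ψ x qj : ℝ) = (j : ℝ) := by exact_mod_cast hq1n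
  have hq2n : wdist ψ qj y = n - j := by simpa using hq2
  have hq2' : (wdist ψ qj y : ℝ) = (n : ℝ) - (j : ℝ) := by
    rw [hq2n]; push_cast [Nat.cast_sub hjn]; ring
  refine ⟨⟨j, by omega⟩, ?_⟩
  show (wdist ψ w qj : ℝ) ≤ gp ψ w x y + 2 * δ + 1
  rcases ha with ha | ha
  · -- a lies on r : y → w
    obtain ⟨s, rfl⟩ := ha
    obtain ⟨hr1, hr2⟩ := geodesic_param hr hs s
    rw [hr0] at hr1
    have hsle : s.val ≤ wdist ψ y w := by omega
    have f3 : (wdist ψ y (r s) : ℝ) = (s.val : ℝ) := by exact_mod_cast hr1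
    have f4 : (wdist ψ (r s) w : ℝ) = (wdist ψ y w : ℝ) - (s.val : ℝ) := by
      rw [hrl] at hr2
      rw [hr2]; push_cast [Nat.cast_sub hsle]; ring
    have f1 := dR_tri hs w (r s) qj
    have f2 := dR_tri hs y (r s) qj
    have g1 : (wdist ψ qj (r s) : ℝ) ≤ δ := hda
    have g2 := dR_symm hs (r s) qj
    have g3 := dR_symm hs w (r s)
    have g4 := dR_symm hs y qj
    have g5 := dR_symm hs w qj
    have g6 := dR_symm hs y w
    have g7 := dR_symm hs x w
    have hnr : (wdist ψ x y : ℝ) = (n : ℝ) := by exact_mod_cast hn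
    unfold gp at hjub ⊢
    linarith
  · -- a lies on p : w → x
    obtain ⟨s, rfl⟩ := ha
    obtain ⟨hp1, hp2⟩ := geodesic_param hp hs s
    rw [hp0] at hp1
    have hsle : s.val ≤ wdist ψ w x := by omega
    have f3 : (wdist ψ w (p s) : ℝ) = (s.val : ℝ) := by exact_mod_cast hp1
    have f4 : (wdist ψ (p s) x : ℝ) = (wdist ψ w x : ℝ) - (s.val : ℝ) := by
      rw [hpl] at hp2
      rw [hp2]; push_cast [Nat.cast_sub hsle]; ring
    have f1 := dR_tri hs w (p s) qj
    have f2 := dR_tri hs x (p s) qj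
    have g1 : (wdist ψ qj (p s) : ℝ) ≤ δ := hda
    have g2 := dR_symm hs (p s) qj
    have g3 := dR_symm hs (p s) x
    have g5 := dR_symm hs w qj
    have g6 := dR_symm hs y w
    have g7 := dR_symm hs x w
    unfold gp at hjlb ⊢
    linarith [hq1']

/-- The four-point inequality, derived from thinness of triangles. -/
theorem four_point (hs : Surjective ψ) {δ : ℝ} (hδ : 0 ≤ δ) (hyp : HypConst ψ δ)
    (w x y z : G) :
    min (gp ψ w x y) (gp ψ w y z) ≤ gp ψ w x z + 3 * δ + 1 := by
  obtain ⟨q, hq, hq0, hql⟩ := exists_geodesic hs x z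
  obtain ⟨q₂, hq₂, hq₂0, hq₂l⟩ := exists_geodesic hs z y
  obtain ⟨q₃, hq₃, hq₃0, hq₃l⟩ := exists_geodesic hs y x
  obtain ⟨i, hi⟩ := gp_realize hs hδ hyp w hq
  rw [hq0, hql] at hi
  have hthin := hyp _ _ _ q q₂ q₃ hq hq₂ hq₃ (by rw [hql, hq₂0]) (by rw [hq₂l, hq₃0])
    (by rw [hq₃l, hq0])
  obtain ⟨hthinq, -, -⟩ := hthin
  obtain ⟨a, ha, hda⟩ := hthinq i
  rcases ha with ha | ha
  · -- a on q₂ : z → y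
    obtain ⟨s, rfl⟩ := ha
    have h1 : gp ψ w z y ≤ (wdist ψ w (q₂ s) : ℝ) := by
      have := gp_le_dist_geodesic hs hq₂ w s
      rwa [hq₂0, hq₂l] at this
    have h2 := dR_tri hs w (q i) (q₂ s)
    have h3 : gp ψ w y z = gp ψ w z y := gp_comm hs w y z
    have : gp ψ w y z ≤ gp ψ w x z + 3 * δ + 1 := by linarith
    exact le_trans (min_le_right _ _) this
  · -- a on q₃ : y → x
    obtain ⟨s, rfl⟩ := ha
    have h1 : gp ψ w y x ≤ (wdist ψ w (q₃ s) : ℝ) := by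
      have := gp_le_dist_geodesic hs hq₃ w s
      rwa [hq₃0, hq₃l] at this
    have h2 := dR_tri hs w (q i) (q₃ s)
    have h3 : gp ψ w x y = gp ψ w y x := gp_comm hs w x y
    have : gp ψ w x y ≤ gp ψ w x z + 3 * δ + 1 := by linarith
    exact le_trans (min_le_left _ _) this

/-- The chain lemma: a chain of points with long steps and small Gromov products makes
linear progress. -/
theorem chain_lemma (hs : Surjective ψ) {δ : ℝ} (hδ : 0 ≤ δ) (hyp : HypConst ψ δ)
    (x : ℕ → G) (t : ℕ) (β γ : ℝ) (hγ : 0 ≤ γ)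
    (hβ : 2 * γ + 2 * (3 * δ + 1) < β)
    (hpiece : ∀ j, 1 ≤ j → j ≤ t → β < (wdist ψ (x (j - 1)) (x j) : ℝ))
    (hgp : ∀ j, 1 ≤ j → j + 1 ≤ t → gp ψ (x j) (x (j - 1)) (x (j + 1)) ≤ γ) :
    ∀ j, j + 1 ≤ t →
      gp ψ (x j) (x 0) (x (j + 1)) ≤ γ + (3 * δ + 1) ∧
      β + j * (β - 2 * γ - 2 * (3 * δ + 1)) ≤ (wdist ψ (x 0) (x (j + 1)) : ℝ) := by
  intro j
  induction j with
  | zero =>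
      intro ht
      constructor
      · have : gp ψ (x 0) (x 0) (x 1) = 0 := by
          unfold gp
          rw [wdist_self]
          push_cast
          ring
        rw [this]
        linarith
      · have := hpiece 1 le_rfl ht
        simpa using this.le
  | succ j ih =>
      intro ht
      have ht' : j + 1 ≤ t := by omega
      obtain ⟨ihgp, ihd⟩ := ih ht'
      set δ₄ : ℝ := 3 * δ + 1 with hδ₄
      have hδ₄0 : 0 ≤ δ₄ := by rw [hδ₄]; linarith
      -- four point at w = x (j+1), with points x j, x 0, x (j+2)
      have h4 := four_point hs hδ hyp (x (j + 1)) (x j) (x 0) (x (j + 2))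
      -- A := gp (x (j+1)) (x j) (x 0) is large
      have hA : (wdist ψ (x j) (x (j + 1)) : ℝ) - (γ + δ₄) ≤ gp ψ (x (j + 1)) (x j) (x 0) := by
        have hadd : gp ψ (x j) (x (j + 1)) (x 0) + gp ψ (x (j + 1)) (x j) (x 0)
            = (wdist ψ (x j) (x (j + 1)) : ℝ) := by
          unfold gp
          rw [dR_symm hs (x (j+1)) (x j), dR_symm hs (x (j+1)) (x 0)]
          ring
        have hcomm : gp ψ (x j) (x (j + 1)) (x 0) = gp ψ (x j) (x 0) (x (j + 1)) :=
          gp_comm hs _ _ _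
        rw [hcomm] at hadd
        linarith
      have hpj : β < (wdist ψ (x j) (x (j + 1)) : ℝ) := by
        have := hpiece (j + 1) (by omega) (by omega)
        simpa using this
      have hc : gp ψ (x (j + 1)) (x j) (x (j + 2)) ≤ γ := by
        have := hgp (j + 1) (by omega) (by omega)
        simpa using this
      have hmin : min (gp ψ (x (j + 1)) (x j) (x 0)) (gp ψ (x (j + 1)) (x 0) (x (j + 2)))
          ≤ γ + δ₄ := by
        calc min _ _ ≤ gp ψ (x (j + 1)) (x j) (x (j + 2)) + 3 * δ + 1 := h4
        _ ≤ γ + δ₄ := by rw [hδ₄]; linarith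
      have hB : gp ψ (x (j + 1)) (x 0) (x (j + 2)) ≤ γ + δ₄ := by
        rcases min_le_iff.1 hmin with h | h
        · exfalso
          have : γ + δ₄ < gp ψ (x (j + 1)) (x j) (x 0) := by linarith
          linarith
        · exact h
      constructor
      · exact hB
      · have hd : (wdist ψ (x 0) (x (j + 2)) : ℝ)
            = (wdist ψ (x 0) (x (j + 1)) : ℝ) + (wdist ψ (x (j + 1)) (x (j + 2)) : ℝ)
              - 2 * gp ψ (x (j + 1)) (x 0) (x (j + 2)) := by
          unfold gp
          rw [dR_symm hs (x (j+1)) (x 0)]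
          ring
        have hpj2 : β < (wdist ψ (x (j + 1)) (x (j + 2)) : ℝ) := by
          have := hpiece (j + 2) (by omega) (by omega)
          simpa using this
        rw [hd]
        push_cast
        push_cast at ihd
        nlinarith [hB, ihd, hpj2]

/-- Window existence: a long loop contains a window of scale `h` whose endpoints are at
distance at most `7/8` of the window length. -/
theorem window_exists (hs : Surjective ψ) {δ : ℝ} (hδ : 0 ≤ δ) (hyp : HypConst ψ δ)
    {l : List (ι × Bool)} (hψl : ψ (FreeGroup.mk l) = 1)
    {h : ℕ} (hh8 : 8 ≤ h) (hhδ : 12 * δ + 4 < (h : ℝ)) (hN : 6 * h < l.length) :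
    ∃ i L : ℕ, i + L ≤ l.length ∧ h ≤ L ∧ L ≤ 3 * h ∧
      8 * wdist ψ (ψ (FreeGroup.mk (l.take i))) (ψ (FreeGroup.mk (l.take (i + L)))) ≤ 7 * L := by
  by_contra hcon
  push_neg at hcon
  set N := l.length with hNdef
  set g : ℕ → G := fun i => ψ (FreeGroup.mk (l.take i)) with hg
  have h0 : 0 < h := by omega
  -- distance upper bound along the loop
  have gwin : ∀ i L : ℕ, (g i)⁻¹ * g (i + L) = ψ (FreeGroup.mk ((l.drop i).take L)) := by
    intro i L
    rw [hg]
    simp only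
    rw [← map_inv, ← map_mul]
    congr 1
    rw [List.take_add, ← FreeGroup.mul_mk]
    group
  have dub : ∀ i L : ℕ, wdist ψ (g i) (g (i + L)) ≤ L := by
    intro i L
    show wlen ψ ((g i)⁻¹ * g (i + L)) ≤ L
    rw [gwin]
    calc wlen ψ _ ≤ wnorm (FreeGroup.mk ((l.drop i).take L)) := wlen_le rfl
    _ ≤ ((l.drop i).take L).length := wnorm_mk_le _
    _ ≤ L := List.length_take_le _ _
  obtain ⟨t, rem, hrem, hNeq⟩ : ∃ t rem : ℕ, rem < h ∧ N = t * h + rem :=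
    ⟨N / h, N % h, Nat.mod_lt N h0, by rw [mul_comm]; exact (Nat.div_add_mod N h).symm⟩
  have hprodid : ∀ j : ℕ, 1 ≤ j → (j - 1) * h + h = j * h := by
    intro j h1
    have e : j - 1 + 1 = j := by omega
    calc (j - 1) * h + h = (j - 1 + 1) * h := by ring
    _ = j * h := by rw [e]
  have hmul_le : ∀ j, j ≤ t → j * h ≤ N := by
    intro j hj
    calc j * h ≤ t * h := Nat.mul_le_mul_right h hj
    _ ≤ N := by omega
  have ht6 : 6 ≤ t := by
    by_contra hcon6
    push_neg at hcon6
    have h61 : t + 1 ≤ 6 := by omega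
    have : (t + 1) * h ≤ 6 * h := Nat.mul_le_mul_right h h61
    have he : (t + 1) * h = t * h + h := by ring
    omega
  set pos : ℕ → ℕ := fun j => if j < t then j * h else N with hpos
  have hpos_lt : ∀ j, j < t → pos j = j * h := by
    intro j hj
    simp only [hpos]
    rw [if_pos hj]
  have hpos_ge : ∀ j, ¬ j < t → pos j = N := by
    intro j hj
    simp only [hpos]
    rw [if_neg hj]
  have hposle : ∀ j, pos j ≤ N := by
    intro j
    by_cases hj : j < t
    · rw [hpos_lt j hj]
      exact hmul_le j (by omega)
    · rw [hpos_ge j hj]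
  have hposs : ∀ j, 1 ≤ j → j ≤ t → pos (j - 1) + (pos j - pos (j - 1)) = pos j
      ∧ h ≤ pos j - pos (j - 1) ∧ pos j - pos (j - 1) ≤ 2 * h := by
    intro j h1 h2
    have e1 : pos (j - 1) = (j - 1) * h := hpos_lt (j - 1) (by omega)
    have hid := hprodid j h1
    by_cases hj : j < t
    · have e2 : pos j = j * h := hpos_lt j hj
      rw [e1, e2]
      omega
    · have hjt : j = t := by omega
      have e2 : pos j = N := hpos_ge j hj
      have h4 : t * h ≤ N := hmul_le t le_rfl
      rw [e1, e2, hjt]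
      rw [hjt] at hid
      omega
  have hposs_exact : ∀ j, 1 ≤ j → j < t → pos j - pos (j - 1) = h ∧ pos (j - 1) ≤ pos j := by
    intro j h1 hj
    have e1 : pos (j - 1) = (j - 1) * h := hpos_lt _ (by omega)
    have e2 : pos j = j * h := hpos_lt j hj
    have hid := hprodid j h1
    rw [e1, e2]
    omega
  have hpos2 : ∀ j, 1 ≤ j → j + 1 ≤ t → pos (j - 1) + (pos (j + 1) - pos (j - 1)) = pos (j + 1)
      ∧ 2 * h ≤ pos (j + 1) - pos (j - 1) ∧ pos (j + 1) - pos (j - 1) ≤ 3 * h := by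
    intro j h1 h2
    obtain ⟨a1, a2⟩ := hposs_exact j h1 (by omega)
    obtain ⟨b1, b2, b3⟩ := hposs (j + 1) (by omega) h2
    have hb : j + 1 - 1 = j := by omega
    rw [hb] at b1 b2 b3
    omega
  set x : ℕ → G := fun j => g (pos j) with hx
  -- chain lemma hypotheses
  have hpiece : ∀ j, 1 ≤ j → j ≤ t → (7 * (h : ℝ)) / 8 < (wdist ψ (x (j - 1)) (x j) : ℝ) := by
    intro j h1 h2
    obtain ⟨a1, a2, a3⟩ := hposs j h1 h2
    set L := pos j - pos (j - 1) with hL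
    have hcon' := hcon (pos (j - 1)) L (by rw [a1]; exact hposle j) a2 (by omega)
    rw [a1] at hcon'
    have : (7 * (L : ℕ) : ℝ) < 8 * (wdist ψ (x (j - 1)) (x j) : ℝ) := by
      rw [hx]
      exact_mod_cast hcon'
    have hLh : (h : ℝ) ≤ (L : ℝ) := by exact_mod_cast a2
    linarith
  have hprod : ∀ j, 1 ≤ j → j + 1 ≤ t →
      gp ψ (x j) (x (j - 1)) (x (j + 1)) ≤ 3 * (h : ℝ) / 16 := by
    intro j h1 h2
    obtain ⟨a1, a2, a3⟩ := hposs j h1 (by omega)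
    obtain ⟨b1, b2, b3⟩ := hposs (j + 1) (by omega) h2
    have hb' : j + 1 - 1 = j := by omega
    rw [hb'] at b1 b2 b3
    obtain ⟨c1, c2, c3⟩ := hpos2 j h1 h2
    -- upper bounds on the two sides
    have u1 : wdist ψ (x (j - 1)) (x j) ≤ pos j - pos (j - 1) := by
      rw [hx]
      have := dub (pos (j - 1)) (pos j - pos (j - 1))
      rwa [a1] at this
    have u2 : wdist ψ (x j) (x (j + 1)) ≤ pos (j + 1) - pos j := by
      rw [hx]
      have := dub (pos j) (pos (j + 1) - pos j)
      rwa [b1] at this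
    -- lower bound on the long window
    have hcon' := hcon (pos (j - 1)) (pos (j + 1) - pos (j - 1))
      (by rw [c1]; exact hposle (j + 1)) (by omega) c3
    rw [c1] at hcon'
    have hlb : (7 : ℝ) * ((pos (j + 1) - pos (j - 1) : ℕ) : ℝ)
        < 8 * (wdist ψ (x (j - 1)) (x (j + 1)) : ℝ) := by
      rw [hx]
      exact_mod_cast hcon'
    have e1 : ((pos (j + 1) - pos (j - 1) : ℕ) : ℝ)
        = ((pos j - pos (j - 1) : ℕ) : ℝ) + ((pos (j + 1) - pos j : ℕ) : ℝ) := by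
      have : pos (j + 1) - pos (j - 1) = (pos j - pos (j - 1)) + (pos (j + 1) - pos j) := by
        omega
      rw [this]
      push_cast
      ring
    have ru1 : (wdist ψ (x (j - 1)) (x j) : ℝ) ≤ ((pos j - pos (j - 1) : ℕ) : ℝ) := by
      exact_mod_cast u1
    have ru2 : (wdist ψ (x j) (x (j + 1)) : ℝ) ≤ ((pos (j + 1) - pos j : ℕ) : ℝ) := by
      exact_mod_cast u2
    have hL3 : ((pos j - pos (j - 1) : ℕ) : ℝ) + ((pos (j + 1) - pos j : ℕ) : ℝ)
        ≤ 3 * (h : ℝ) := by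
      have : (pos j - pos (j - 1)) + (pos (j + 1) - pos j) ≤ 3 * h := by omega
      exact_mod_cast this
    unfold gp
    rw [dR_symm hs (x j) (x (j - 1))]
    linarith
  -- apply the chain lemma
  have hchain := chain_lemma hs hδ hyp x t (7 * (h : ℝ) / 8) (3 * (h : ℝ) / 16)
    (by positivity) (by push_cast; linarith) hpiece hprod (t - 1) (by omega)
  obtain ⟨-, hdist⟩ := hchain
  have hterm : (0 : ℝ) < 7 * (h : ℝ) / 8 - 2 * (3 * (h : ℝ) / 16) - 2 * (3 * δ + 1) := by
    push_cast
    linarith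
  have htpos : (0 : ℝ) ≤ ((t - 1 : ℕ) : ℝ) := Nat.cast_nonneg _
  have hlow : (0 : ℝ) < (wdist ψ (x 0) (x (t - 1 + 1)) : ℝ) := by
    have hb : (0 : ℝ) < 7 * (h : ℝ) / 8 := by positivity
    nlinarith
  -- but the endpoints coincide
  have hx0 : x 0 = 1 := by
    rw [hx]
    simp only
    have : pos 0 = 0 := by rw [hpos]; simp only [if_pos (by omega : 0 < t)]; ring
    rw [this, hg]
    simp only [List.take_zero]
    rw [show (FreeGroup.mk ([] : List (ι × Bool))) = 1 from rfl, map_one]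
  have hxt : x (t - 1 + 1) = 1 := by
    have : t - 1 + 1 = t := by omega
    rw [this, hx]
    simp only
    have : pos t = N := by rw [hpos]; simp only [if_neg (lt_irrefl t)]
    rw [this, hg]
    simp only
    rw [hNdef, List.take_length]
    exact hψl
  rw [hx0, hxt, wdist_self] at hlow
  norm_num at hlow

/-- The core filling lemma: in a `δ`-hyperbolic marked group, loops fill linearly
at every scale `m ≳ δ`. -/
theorem core_filling (hs : Surjective ψ) {δ : ℝ} (hδ : 0 ≤ δ) (hyp : HypConst ψ δ)
    {m h : ℕ} (hh8 : 8 ≤ h) (hhδ : 12 * δ + 4 < (h : ℝ))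
    (h45 : 45 * h ≤ 8 * m) (h6 : 6 * h ≤ m) :
    ∀ N : ℕ, ∀ w : FreeGroup ι, ψ w = 1 → wnorm w ≤ N →
      ∃ A : ℕ, AreaLe (triv ψ m) w A ∧ h * A ≤ h + 8 * N := by
  intro N
  induction N using Nat.strong_induction_on with
  | _ N ih =>
    intro w hw hwN
    by_cases hsmall : wnorm w ≤ m
    · refine ⟨1, areaLe_of_mem ⟨hsmall, hw⟩, by omega⟩
    · push_neg at hsmall
      letI instDec : DecidableEq ι := Classical.decEq ι
      set l := FreeGroup.toWord w with hldef
      have hlw : FreeGroup.mk l = w := FreeGroup.mk_toWord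
      have hlen : l.length = wnorm w := rfl
      have hN6 : 6 * h < l.length := by omega
      obtain ⟨i, L, hiL, hhL, hL3, hwin⟩ :=
        window_exists hs hδ hyp (by rw [hlw]; exact hw) hh8 hhδ hN6
      set p := FreeGroup.mk (l.take i) with hp
      set v := FreeGroup.mk ((l.drop i).take L) with hv
      set qq := FreeGroup.mk (l.drop (i + L)) with hqq
      have hpv : p * v = FreeGroup.mk (l.take (i + L)) := by
        rw [hp, hv, FreeGroup.mul_mk, ← List.take_add]
      have hdecomp : p * v * qq = w := by
        rw [hpv, hqq, FreeGroup.mul_mk, List.take_append_drop, hlw]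
      -- the short word u realizing the window distance
      obtain ⟨u, hu, huv⟩ := exists_wlen hs ((ψ p)⁻¹ * ψ (FreeGroup.mk (l.take (i + L))))
      have hud : wnorm u = wdist ψ (ψ p) (ψ (FreeGroup.mk (l.take (i + L)))) := hu
      have hψv : ψ v = ψ u := by
        rw [huv, ← hpv, map_mul]
        group
      set r := u⁻¹ * v with hr
      have hψr : ψ r = 1 := by
        rw [hr, map_mul, map_inv, hψv]
        group
      have hvL : wnorm v ≤ L := by
        rw [hv]
        calc wnorm _ ≤ ((l.drop i).take L).length := wnorm_mk_le _
        _ ≤ L := List.length_take_le _ _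
      have hd7 : 8 * wnorm u ≤ 7 * L := by
        rw [hud, hp]
        exact hwin
      have hrm : r ∈ triv ψ m := by
        refine ⟨?_, hψr⟩
        calc wnorm r ≤ wnorm u⁻¹ + wnorm v := wnorm_mul_le _ _
        _ = wnorm u + wnorm v := by rw [wnorm_inv]
        _ ≤ m := by omega
      set w' := p * u * qq with hw'
      have hww' : w = w' * (qq⁻¹ * r * qq) := by
        rw [hw', hr, ← hdecomp]
        group
      have hψw' : ψ w' = 1 := by
        have hc : ψ (qq⁻¹ * r * qq) = 1 := by
          rw [map_mul, map_mul, map_inv, hψr]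
          group
        have h2 : ψ w' * ψ (qq⁻¹ * r * qq) = 1 := by
          rw [← map_mul, ← hww']
          exact hw
        rwa [hc, mul_one] at h2
      have hpn : wnorm p ≤ i := by
        rw [hp]
        calc wnorm _ ≤ (l.take i).length := wnorm_mk_le _
        _ ≤ i := List.length_take_le _ _
      have hqn : wnorm qq ≤ l.length - (i + L) := by
        rw [hqq]
        calc wnorm _ ≤ (l.drop (i + L)).length := wnorm_mk_le _
        _ = l.length - (i + L) := List.length_drop
      have hw'n : 8 * wnorm w' + h ≤ 8 * wnorm w := by
        have step : wnorm w' ≤ wnorm p + wnorm u + wnorm qq := by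
          calc wnorm w' ≤ wnorm (p * u) + wnorm qq := wnorm_mul_le _ _
          _ ≤ wnorm p + wnorm u + wnorm qq := by
              have := wnorm_mul_le p u
              omega
        omega
      have hN' : wnorm w' < N := by omega
      obtain ⟨A', hA', hbA'⟩ := ih (wnorm w') hN' w' hψw' le_rfl
      have hmulid : h * (A' + 1) = h * A' + h := by ring
      refine ⟨A' + 1, ?_, by omega⟩
      rw [hww']
      exact areaLe_mul hA' (areaLe_conj qq (areaLe_of_mem hrm))

end Hyp

/-! ### From limits of hyperbolic groups to the linear spectrum -/

theorem exists_index {R : ℕ → Set (FreeGroup ι)} (hmono : ∀ i j, i ≤ j → R i ⊆ R j)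
    {x : FreeGroup ι} (hx : x ∈ Subgroup.normalClosure (⋃ i, R i)) :
    ∃ j, x ∈ Subgroup.normalClosure (R j) := by
  set N : ℕ → Subgroup (FreeGroup ι) := fun i => Subgroup.normalClosure (R i) with hN
  have hNmono : Monotone N := fun i j hij => Subgroup.normalClosure_mono (hmono i j hij)
  have hdir : Directed (· ≤ ·) N := hNmono.directed_le
  haveI hnormal : (⨆ i, N i).Normal := by
    constructor
    intro y hy g
    rw [Subgroup.mem_iSup_of_directed hdir] at hy ⊢
    obtain ⟨i, hi⟩ := hy
    exact ⟨i, Subgroup.normalClosure_normal.conj_mem y hi g⟩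
  have hle : Subgroup.normalClosure (⋃ i, R i) ≤ ⨆ i, N i := by
    apply Subgroup.normalClosure_le_normal
    apply Set.iUnion_subset
    intro i y hy
    exact (le_iSup N i) (Subgroup.subset_normalClosure hy)
  have := hle hx
  rwa [Subgroup.mem_iSup_of_directed hdir] at this

theorem exists_common_index {R : ℕ → Set (FreeGroup ι)} (hmono : ∀ i j, i ≤ j → R i ⊆ R j)
    {s : Set (FreeGroup ι)} (hfin : s.Finite)
    (hs : ∀ x ∈ s, x ∈ Subgroup.normalClosure (⋃ i, R i)) :
    ∃ j, ∀ x ∈ s, x ∈ Subgroup.normalClosure (R j) := by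
  refine Set.Finite.induction_on
    (motive := fun s _ => (∀ x ∈ s, x ∈ Subgroup.normalClosure (⋃ i, R i)) →
      ∃ j, ∀ x ∈ s, x ∈ Subgroup.normalClosure (R j)) s hfin ?_ ?_ hs
  · intro _
    exact ⟨0, by simp⟩
  · intro a s _ _ ih hmem
    obtain ⟨j1, hj1⟩ := ih (fun x hx => hmem x (Set.mem_insert_of_mem a hx))
    obtain ⟨j2, hj2⟩ := exists_index hmono (hmem a (Set.mem_insert a s))
    refine ⟨max j1 j2, ?_⟩
    intro x hx
    rcases Set.mem_insert_iff.1 hx with rfl | hx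
    · exact Subgroup.normalClosure_mono (hmono j2 _ (le_max_right _ _)) hj2
    · exact Subgroup.normalClosure_mono (hmono j1 _ (le_max_left _ _)) (hj1 x hx)

/-- Claim A: for a limit of hyperbolic groups, the spectrum at a fixed relator scale `k₀`
is linear for large `m`. -/
theorem claimA {a : ℕ} {G : Type} [Group G] (φ : FreeGroup (Fin a) →* G)
    (hlim : LimitOfHyperbolic φ) (k₀ : ℕ) :
    ∃ D : ℕ, 0 < D ∧ ∀ m n : ℕ, D ≤ m →
      isoSpecR φ k₀ m n ≤ D * n / m + D := by
  obtain ⟨hsurj, R, hmono, hker, hhyp⟩ := hlim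
  have hfin : (triv φ k₀).Finite := (finite_wnorm_le k₀).subset (fun w hw => hw.1)
  have hmem : ∀ x ∈ triv φ k₀, x ∈ Subgroup.normalClosure (⋃ i, R i) := by
    intro x hx
    rw [← hker]
    exact hx.2
  obtain ⟨j, hj⟩ := exists_common_index hmono hfin hmem
  set Nj := Subgroup.normalClosure (R j) with hNj
  set ψ : FreeGroup (Fin a) →* FreeGroup (Fin a) ⧸ Nj := QuotientGroup.mk' Nj with hψdef
  have hsψ : Surjective ψ := QuotientGroup.mk'_surjective Nj
  have hψker : ∀ x : FreeGroup (Fin a), ψ x = 1 ↔ x ∈ Nj := fun x =>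
    QuotientGroup.eq_one_iff x
  obtain ⟨δ, hδ0, hyp⟩ := hhyp j
  set D : ℕ := 72 * ⌈δ⌉₊ + 200 with hD
  refine ⟨D, by positivity, ?_⟩
  intro m n hDm
  have hm : 0 < m := by omega
  set h : ℕ := m / 6 with hh
  have h6 : 6 * h ≤ m := by omega
  have hh8 : 8 ≤ h := by omega
  have h45 : 45 * h ≤ 8 * m := by omega
  have h12 : m ≤ 12 * h := by omega
  have hhδ : 12 * δ + 4 < (h : ℝ) := by
    have hceil : δ ≤ (⌈δ⌉₊ : ℝ) := Nat.le_ceil δ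
    have hnat : 12 * ⌈δ⌉₊ + 33 ≤ h := by omega
    have hcast : ((12 * ⌈δ⌉₊ + 33 : ℕ) : ℝ) ≤ (h : ℝ) := by exact_mod_cast hnat
    push_cast at hcast
    linarith
  -- the inclusion of relator sets
  have htriv : triv ψ m ⊆ triv φ m := by
    rintro x ⟨hx1, hx2⟩
    refine ⟨hx1, ?_⟩
    have hxN : x ∈ Nj := (hψker x).1 hx2
    have hsub : Nj ≤ φ.ker := by
      rw [hker, hNj]
      exact Subgroup.normalClosure_mono (Set.subset_iUnion R j)
    exact hsub hxN
  set B : ℝ := D * n / m + D with hB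
  have hB0 : 0 ≤ B := by positivity
  -- bound every element of the image set
  have hbound : ∀ w : FreeGroup (Fin a),
      w ∈ Subgroup.normalClosure (triv φ k₀) → wnorm w ≤ n →
      (area (triv φ m) w : ℝ) ≤ B := by
    intro w hw1 hw2
    have hwN : w ∈ Nj := by
      have hle : Subgroup.normalClosure (triv φ k₀) ≤ Nj :=
        Subgroup.normalClosure_le_normal hj
      exact hle hw1
    have hψw : ψ w = 1 := (hψker w).2 hwN
    obtain ⟨A, hA, hbA⟩ := core_filling hsψ hδ0 hyp hh8 hhδ h45 h6 (wnorm w) w hψw le_rfl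
    have hA' : AreaLe (triv φ m) w A := areaLe_mono htriv hA
    have harea : area (triv φ m) w ≤ A := Nat.sInf_le hA'
    have hh0 : (0 : ℝ) < (h : ℕ) := by exact_mod_cast (by omega : 0 < h)
    have hm0 : (0 : ℝ) < (m : ℕ) := by exact_mod_cast hm
    have hAr : (A : ℝ) ≤ 1 + 8 * (wnorm w : ℝ) / h := by
      have hc : (h : ℝ) * A ≤ (h : ℝ) + 8 * (wnorm w : ℝ) := by exact_mod_cast hbA
      have hdiv : (A : ℝ) ≤ ((h : ℝ) + 8 * (wnorm w : ℝ)) / h := by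
        rw [le_div_iff₀ hh0]
        nlinarith only [hc]
      calc (A : ℝ) ≤ ((h : ℝ) + 8 * (wnorm w : ℝ)) / h := hdiv
      _ = 1 + 8 * (wnorm w : ℝ) / h := by field_simp
    have hwn : (wnorm w : ℝ) ≤ (n : ℝ) := by exact_mod_cast hw2
    have hfrac : 8 * (wnorm w : ℝ) / h ≤ 96 * (n : ℝ) / m := by
      rw [div_le_div_iff₀ hh0 hm0]
      have h12' : (m : ℝ) ≤ 12 * (h : ℝ) := by exact_mod_cast h12
      have c1 : (0 : ℝ) ≤ (wnorm w : ℝ) := Nat.cast_nonneg _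
      have c2 : (0 : ℝ) ≤ (n : ℝ) := Nat.cast_nonneg _
      nlinarith only [hh0.le, hwn, h12', c1, c2]
    have hD96 : (96 : ℝ) ≤ (D : ℕ) := by
      have : (96 : ℕ) ≤ D := by omega
      exact_mod_cast this
    have hD1 : (1 : ℝ) ≤ (D : ℕ) := by
      have : (1 : ℕ) ≤ D := by omega
      exact_mod_cast this
    have hnm : 0 ≤ (n : ℝ) / m := by positivity
    calc (area (triv φ m) w : ℝ) ≤ (A : ℝ) := by exact_mod_cast harea
    _ ≤ 1 + 8 * (wnorm w : ℝ) / h := hAr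
    _ ≤ 1 + 96 * (n : ℝ) / m := by linarith
    _ ≤ B := by
        rw [hB]
        have : (96 : ℝ) * ((n : ℝ) / m) ≤ (D : ℝ) * ((n : ℝ) / m) :=
          mul_le_mul_of_nonneg_right hD96 hnm
        have e1 : (96 : ℝ) * (n : ℝ) / m = 96 * ((n : ℝ) / m) := by ring
        have e2 : (D : ℝ) * (n : ℝ) / m = (D : ℝ) * ((n : ℝ) / m) := by ring
        rw [e1, e2]
        linarith
  -- conclude via the supremum
  have hne : (area (triv φ m) ''
      {w | w ∈ Subgroup.normalClosure (triv φ k₀) ∧ wnorm w ≤ n}).Nonempty := by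
    refine ⟨area (triv φ m) 1, 1, ⟨Subgroup.one_mem _, ?_⟩, rfl⟩
    rw [wnorm_one]
    omega
  have hsup : isoSpec φ k₀ m n ≤ ⌊B⌋₊ := by
    apply csSup_le hne
    rintro x ⟨w, ⟨hw1, hw2⟩, rfl⟩
    exact Nat.le_floor (hbound w hw1 hw2)
  calc isoSpecR φ k₀ m n = ((isoSpec φ k₀ m n : ℕ) : ℝ) := rfl
  _ ≤ (⌊B⌋₊ : ℝ) := by exact_mod_cast hsup
  _ ≤ B := Nat.floor_le hB0

set_option maxHeartbeats 2000000 in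
/-- If `G` is a limit of hyperbolic groups and its isoperimetric
spectrum is essentially independent of `k` (equivalent to a function in `𝓕` depending
on `m` and `n` only), then the spectrum is linear. -/
theorem linear_isoSpec_of_limitOfHyperbolic_of_indep {G : Type} [Group G] {a : ℕ}
    (φ : FreeGroup (Fin a) →* G) (hlim : LimitOfHyperbolic φ)
    (hindep : ∃ g : ℕ → ℕ → ℝ,
      (∀ n : ℕ, 0 < n → ∀ m m' : ℕ, 0 < m → m ≤ m' → g m' n ≤ g m n) ∧
      (∀ m : ℕ, 0 < m → ∀ n n' : ℕ, 0 < n → n ≤ n' → g m n ≤ g m n') ∧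
      SpecEquiv (isoSpecR φ) (fun _ m n => g m n)) :
    SpecEquiv (isoSpecR φ) linSpec := by
  obtain ⟨g, -, -, ⟨C₁, hC₁, h1⟩, ⟨C₂, hC₂, h2⟩⟩ := hindep
  obtain ⟨D, hDpos, hDb⟩ := claimA φ hlim C₂
  constructor
  · -- the hard direction: `isoSpecR φ ≼ linSpec`
    set M : ℕ := 6 * (D + C₁ + C₂) with hM
    have hMpos : 0 < M := by omega
    refine ⟨C₁ * C₂ * M, by positivity, ?_⟩
    intro k m n hk hm hn hkm
    have hC2Mm : 0 < C₂ * (M * m) := by positivity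
    have hMm : 0 < M * m := by positivity
    have hC1n : 0 < C₁ * n := by positivity
    have t3 : m ≤ C₂ * (M * m) := by
      calc m ≤ (C₂ * M) * m := Nat.le_mul_of_pos_left m (by positivity)
      _ = C₂ * (M * m) := by ring
    have t3' : m ≤ M * m := Nat.le_mul_of_pos_left m hMpos
    have cond1 : C₁ * k ≤ C₂ * (M * m) := by
      have t2 : C₁ * k ≤ (C₁ * C₂ * M) * k := by
        refine Nat.mul_le_mul_right k ?_
        calc C₁ ≤ C₁ * (C₂ * M) := Nat.le_mul_of_pos_right C₁ (by positivity)
        _ = C₁ * C₂ * M := by ring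
      exact le_trans t2 (le_trans hkm t3)
    have cond2 : C₂ * 1 ≤ M * m := by
      have hCM : C₂ ≤ M := by omega
      calc C₂ * 1 = C₂ := mul_one C₂
      _ ≤ M := hCM
      _ ≤ M * m := Nat.le_mul_of_pos_right M hm
    have condD : D ≤ M * m := by
      have hDM : D ≤ M := by omega
      exact le_trans hDM (Nat.le_mul_of_pos_right M hm)
    have s1 : isoSpecR φ k (C₁ * (C₂ * (M * m))) n
        ≤ (C₁ : ℝ) * g (C₂ * (M * m)) (C₁ * n) + (C₁ : ℝ) * (n : ℝ) / ((C₂ * (M * m) : ℕ) : ℝ)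
          + (C₁ : ℝ) := h1 k (C₂ * (M * m)) n hk hC2Mm hn cond1
    have s2 : g (C₂ * (M * m)) (C₁ * n)
        ≤ (C₂ : ℝ) * isoSpecR φ (C₂ * 1) (M * m) (C₂ * (C₁ * n))
          + (C₂ : ℝ) * ((C₁ * n : ℕ) : ℝ) / ((M * m : ℕ) : ℝ) + (C₂ : ℝ) :=
      h2 1 (M * m) (C₁ * n) one_pos hMm hC1n cond2
    have s3 : isoSpecR φ C₂ (M * m) (C₂ * (C₁ * n))
        ≤ (D : ℝ) * ((C₂ * (C₁ * n) : ℕ) : ℝ) / ((M * m : ℕ) : ℝ) + (D : ℝ) :=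
      hDb (M * m) (C₂ * (C₁ * n)) condD
    rw [mul_one] at s2
    -- real-number facts
    have hm0 : (0 : ℝ) < (m : ℝ) := by exact_mod_cast hm
    have hn0 : (0 : ℝ) ≤ (n : ℝ) := Nat.cast_nonneg _
    have hc1 : (1 : ℝ) ≤ (C₁ : ℝ) := by exact_mod_cast hC₁
    have hc2 : (1 : ℝ) ≤ (C₂ : ℝ) := by exact_mod_cast hC₂
    have hd1 : (1 : ℝ) ≤ (D : ℝ) := by exact_mod_cast hDpos
    have hMr : (M : ℝ) = 6 * ((D : ℝ) + (C₁ : ℝ) + (C₂ : ℝ)) := by exact_mod_cast hM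
    set X : ℝ := (n : ℝ) / (m : ℝ) with hX
    have hX0 : 0 ≤ X := by rw [hX]; positivity
    have hden1 : (m : ℝ) ≤ ((C₂ * (M * m) : ℕ) : ℝ) := by exact_mod_cast t3
    have hden2 : (m : ℝ) ≤ ((M * m : ℕ) : ℝ) := by exact_mod_cast t3'
    have q1 : (C₁ : ℝ) * (n : ℝ) / ((C₂ * (M * m) : ℕ) : ℝ) ≤ (C₁ : ℝ) * X := by
      calc (C₁ : ℝ) * (n : ℝ) / ((C₂ * (M * m) : ℕ) : ℝ)
          ≤ (C₁ : ℝ) * (n : ℝ) / (m : ℝ) :=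
            div_le_div_of_nonneg_left (by positivity) hm0 hden1
      _ = (C₁ : ℝ) * X := by rw [hX]; ring
    have q2 : (C₂ : ℝ) * ((C₁ * n : ℕ) : ℝ) / ((M * m : ℕ) : ℝ)
        ≤ (C₂ : ℝ) * (C₁ : ℝ) * X := by
      calc (C₂ : ℝ) * ((C₁ * n : ℕ) : ℝ) / ((M * m : ℕ) : ℝ)
          ≤ (C₂ : ℝ) * ((C₁ * n : ℕ) : ℝ) / (m : ℝ) :=
            div_le_div_of_nonneg_left (by positivity) hm0 hden2
      _ = (C₂ : ℝ) * (C₁ : ℝ) * X := by rw [hX]; push_cast; ring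
    have q3 : (D : ℝ) * ((C₂ * (C₁ * n) : ℕ) : ℝ) / ((M * m : ℕ) : ℝ)
        ≤ (D : ℝ) * (C₂ : ℝ) * (C₁ : ℝ) * X := by
      calc (D : ℝ) * ((C₂ * (C₁ * n) : ℕ) : ℝ) / ((M * m : ℕ) : ℝ)
          ≤ (D : ℝ) * ((C₂ * (C₁ * n) : ℕ) : ℝ) / (m : ℝ) :=
            div_le_div_of_nonneg_left (by positivity) hm0 hden2
      _ = (D : ℝ) * (C₂ : ℝ) * (C₁ : ℝ) * X := by rw [hX]; push_cast; ring
    have tI : isoSpecR φ C₂ (M * m) (C₂ * (C₁ * n))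
        ≤ (D : ℝ) * (C₂ : ℝ) * (C₁ : ℝ) * X + (D : ℝ) := by linarith
    have tG : g (C₂ * (M * m)) (C₁ * n)
        ≤ (C₂ : ℝ) * ((D : ℝ) * (C₂ : ℝ) * (C₁ : ℝ) * X + (D : ℝ))
          + (C₂ : ℝ) * (C₁ : ℝ) * X + (C₂ : ℝ) := by
      have hmul := mul_le_mul_of_nonneg_left tI (show (0 : ℝ) ≤ (C₂ : ℝ) by positivity)
      linarith
    have tL : isoSpecR φ k (C₁ * (C₂ * (M * m))) n
        ≤ (C₁ : ℝ) * ((C₂ : ℝ) * ((D : ℝ) * (C₂ : ℝ) * (C₁ : ℝ) * X + (D : ℝ))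
          + (C₂ : ℝ) * (C₁ : ℝ) * X + (C₂ : ℝ)) + (C₁ : ℝ) * X + (C₁ : ℝ) := by
      have hmul := mul_le_mul_of_nonneg_left tG (show (0 : ℝ) ≤ (C₁ : ℝ) by positivity)
      linarith
    -- conclude
    show isoSpecR φ k (C₁ * C₂ * M * m) n
        ≤ ((C₁ * C₂ * M : ℕ) : ℝ) * linSpec (C₁ * C₂ * M * k) m (C₁ * C₂ * M * n)
          + ((C₁ * C₂ * M : ℕ) : ℝ) * (n : ℝ) / (m : ℝ) + ((C₁ * C₂ * M : ℕ) : ℝ)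
    have hargeq : C₁ * C₂ * M * m = C₁ * (C₂ * (M * m)) := by ring
    rw [hargeq]
    have hlin : linSpec (C₁ * C₂ * M * k) m (C₁ * C₂ * M * n)
        = ((C₁ * C₂ * M * n : ℕ) : ℝ) / (m : ℝ) := rfl
    rw [hlin]
    refine le_trans tL ?_
    -- notation: spell out the big constant
    have hBIG : ((C₁ * C₂ * M : ℕ) : ℝ)
        = (C₁ : ℝ) * (C₂ : ℝ) * (6 * ((D : ℝ) + (C₁ : ℝ) + (C₂ : ℝ))) := by
      rw [hM]; push_cast; ring
    have hBIGn : ((C₁ * C₂ * M * n : ℕ) : ℝ)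
        = (C₁ : ℝ) * (C₂ : ℝ) * (6 * ((D : ℝ) + (C₁ : ℝ) + (C₂ : ℝ))) * (n : ℝ) := by
      rw [hM]; push_cast; ring
    rw [hBIG, hBIGn]
    have e1 : (C₁ : ℝ) * (C₂ : ℝ) * (6 * ((D : ℝ) + (C₁ : ℝ) + (C₂ : ℝ)))
          * ((C₁ : ℝ) * (C₂ : ℝ) * (6 * ((D : ℝ) + (C₁ : ℝ) + (C₂ : ℝ))) * (n : ℝ) / (m : ℝ))
        = ((C₁ : ℝ) * (C₂ : ℝ) * (6 * ((D : ℝ) + (C₁ : ℝ) + (C₂ : ℝ)))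
            * ((C₁ : ℝ) * (C₂ : ℝ) * (6 * ((D : ℝ) + (C₁ : ℝ) + (C₂ : ℝ))))) * X := by
      rw [hX]; ring
    have e2 : (C₁ : ℝ) * (C₂ : ℝ) * (6 * ((D : ℝ) + (C₁ : ℝ) + (C₂ : ℝ))) * (n : ℝ) / (m : ℝ)
        = ((C₁ : ℝ) * (C₂ : ℝ) * (6 * ((D : ℝ) + (C₁ : ℝ) + (C₂ : ℝ)))) * X := by
      rw [hX]; ring
    rw [e1, e2]
    have eqC : (C₁ : ℝ) * ((C₂ : ℝ) * ((D : ℝ) * (C₂ : ℝ) * (C₁ : ℝ) * X + (D : ℝ))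
          + (C₂ : ℝ) * (C₁ : ℝ) * X + (C₂ : ℝ)) + (C₁ : ℝ) * X + (C₁ : ℝ)
        = ((C₁ : ℝ) * (C₂ : ℝ) * (D : ℝ) * (C₂ : ℝ) * (C₁ : ℝ)
            + (C₁ : ℝ) * (C₂ : ℝ) * (C₁ : ℝ) + (C₁ : ℝ)) * X
          + ((C₁ : ℝ) * (C₂ : ℝ) * (D : ℝ) + (C₁ : ℝ) * (C₂ : ℝ) + (C₁ : ℝ)) := by
      ring
    rw [eqC]
    -- the constant comparisons
    have hs1' : (1 : ℝ) ≤ (D : ℝ) + (C₁ : ℝ) + (C₂ : ℝ) := by linarith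
    have hp1 : (1 : ℝ) ≤ (C₁ : ℝ) * (C₂ : ℝ) := by nlinarith only [hc1, hc2]
    have hp0 : (0 : ℝ) ≤ (C₁ : ℝ) * (C₂ : ℝ) := by linarith
    have hDs : (D : ℝ) ≤ (D : ℝ) + (C₁ : ℝ) + (C₂ : ℝ) := by linarith
    have hC1s : (C₁ : ℝ) ≤ (D : ℝ) + (C₁ : ℝ) + (C₂ : ℝ) := by linarith
    have hE2 : (C₁ : ℝ) * (C₂ : ℝ) * (D : ℝ) + (C₁ : ℝ) * (C₂ : ℝ) + (C₁ : ℝ)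
        ≤ (C₁ : ℝ) * (C₂ : ℝ) * (6 * ((D : ℝ) + (C₁ : ℝ) + (C₂ : ℝ))) := by
      nlinarith only [hc1, hc2, hd1, hp1, hs1', hp0, hDs, hC1s]
    have hE1 : (C₁ : ℝ) * (C₂ : ℝ) * (D : ℝ) * (C₂ : ℝ) * (C₁ : ℝ)
          + (C₁ : ℝ) * (C₂ : ℝ) * (C₁ : ℝ) + (C₁ : ℝ)
        ≤ ((C₁ : ℝ) * (C₂ : ℝ) * (6 * ((D : ℝ) + (C₁ : ℝ) + (C₂ : ℝ))))
          * ((C₁ : ℝ) * (C₂ : ℝ) * (6 * ((D : ℝ) + (C₁ : ℝ) + (C₂ : ℝ)))) := by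
      set s : ℝ := (D : ℝ) + (C₁ : ℝ) + (C₂ : ℝ) with hsdef
      set p : ℝ := (C₁ : ℝ) * (C₂ : ℝ) with hpdef
      have hss : s ≤ s * s := by nlinarith only [hs1']
      have hpp1 : (1 : ℝ) ≤ p * p := by nlinarith only [hp1]
      have hsspos : (0 : ℝ) ≤ s * s := by nlinarith only [hs1']
      have b1 : p * p * (D : ℝ) ≤ (p * p) * (s * s) :=
        mul_le_mul_of_nonneg_left (le_trans hDs hss) (by nlinarith only [hp1])
      have b2 : p * (C₁ : ℝ) ≤ (p * p) * (s * s) := by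
        have h1' : p * (C₁ : ℝ) ≤ p * (s * s) :=
          mul_le_mul_of_nonneg_left (le_trans hC1s hss) hp0
        have h2' : p * (s * s) ≤ (p * p) * (s * s) := by
          have : p * 1 ≤ p * (p * 1) := by nlinarith only [hp1, hp0]
          nlinarith only [hp1, hp0, hsspos, this, hpp1]
        linarith
      have b3 : (C₁ : ℝ) ≤ (p * p) * (s * s) := by
        have h1' : (C₁ : ℝ) ≤ s * s := le_trans hC1s hss
        nlinarith only [h1', hpp1, hsspos]
      have b0 : (0 : ℝ) ≤ (p * p) * (s * s) := by nlinarith only [hpp1, hsspos]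
      have hexp : ((C₁ : ℝ) * (C₂ : ℝ) * (D : ℝ) * (C₂ : ℝ) * (C₁ : ℝ)
          + (C₁ : ℝ) * (C₂ : ℝ) * (C₁ : ℝ) + (C₁ : ℝ))
          = p * p * (D : ℝ) + p * (C₁ : ℝ) + (C₁ : ℝ) := by rw [hpdef]; ring
      have hexp2 : ((C₁ : ℝ) * (C₂ : ℝ) * (6 * ((D : ℝ) + (C₁ : ℝ) + (C₂ : ℝ))))
          * ((C₁ : ℝ) * (C₂ : ℝ) * (6 * ((D : ℝ) + (C₁ : ℝ) + (C₂ : ℝ))))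
          = 36 * ((p * p) * (s * s)) := by rw [hpdef, hsdef]; ring
      rw [hexp, hexp2]
      linarith
    have m1 := mul_le_mul_of_nonneg_right hE1 hX0
    have hγ0 : (0 : ℝ) ≤ ((C₁ : ℝ) * (C₂ : ℝ) * (6 * ((D : ℝ) + (C₁ : ℝ) + (C₂ : ℝ)))) * X := by
      have h0' : (0 : ℝ) ≤ (C₁ : ℝ) * (C₂ : ℝ) * (6 * ((D : ℝ) + (C₁ : ℝ) + (C₂ : ℝ))) := by
        positivity
      exact mul_nonneg h0' hX0
    linarith only [m1, hE2, hγ0, hX0]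
  · -- the easy direction: `linSpec ≼ isoSpecR φ`
    refine ⟨1, one_pos, ?_⟩
    intro k m n hk hm hn hkm
    have h0 : (0 : ℝ) ≤ isoSpecR φ (1 * k) m (1 * n) := Nat.cast_nonneg _
    show linSpec k (1 * m) n ≤ ((1 : ℕ) : ℝ) * isoSpecR φ (1 * k) m (1 * n)
      + ((1 : ℕ) : ℝ) * (n : ℝ) / (m : ℝ) + ((1 : ℕ) : ℝ)
    have hlin : linSpec k (1 * m) n = (n : ℝ) / ((1 * m : ℕ) : ℝ) := rfl
    rw [hlin]
    have e : ((1 * m : ℕ) : ℝ) = (m : ℝ) := by push_cast; ring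
    rw [e]
    push_cast
    have eq1 : (1 : ℝ) * (n : ℝ) / (m : ℝ) = (n : ℝ) / (m : ℝ) := by ring
    linarith [h0, eq1]

end IsoSpecPaper
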